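/- (Indistinguishability under realistic feedback.) Let f := (64/3)·(𝟙_{[0,1/8]×[3/8,1/2]} + 𝟙_{[1/4,3/8]×[7/8,1]} + 𝟙_{[1/2,5/8]×[5/8,3/4]}) and g(s,b) := f(1−b, 1−s), both probability densities on [0,1]². Then: (i) for every p ∈ [0,1], the joint distribution of the pair (𝟙{S ≤ p}, 𝟙{p ≤ B}) is the same when (S,B) has density f as when (S,B) has density g; (ii) when (S,B) has density f, E[gft(3/8, S, B)] = 1/3 while E[gft(p, S, B)] ≤ 1/4 for every p ∈ (1/2, 1]; and symmetrically, when (S,B) has density g, E[gft(5/8, S, B)] = 1/3 while E[gft(p, S, B)] ≤ 1/4 for every p ∈ [0, 1/2]. -/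

import Mathlib

open MeasureTheory Set
open scoped ENNReal

/-- Gain from trade: `gft p s b = (b - s) · 𝟙{s ≤ p ≤ b}`. -/
noncomputable def gft (p s b : ℝ) : ℝ := if s ≤ p ∧ p ≤ b then b - s else 0

/-- The density `f = (64/3)·(𝟙_{[0,1/8]×[3/8,1/2]} + 𝟙_{[1/4,3/8]×[7/8,1]} + 𝟙_{[1/2,5/8]×[5/8,3/4]})`. -/
noncomputable def fdens : ℝ × ℝ → ℝ := fun x =>
  (64 / 3) * ((if x.1 ∈ Icc (0:ℝ) (1/8) ∧ x.2 ∈ Icc (3/8:ℝ) (1/2) then (1:ℝ) else 0)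
    + (if x.1 ∈ Icc (1/4:ℝ) (3/8) ∧ x.2 ∈ Icc (7/8:ℝ) 1 then (1:ℝ) else 0)
    + (if x.1 ∈ Icc (1/2:ℝ) (5/8) ∧ x.2 ∈ Icc (5/8:ℝ) (3/4) then (1:ℝ) else 0))

/-- The reflected density `g(s,b) = f(1−b, 1−s)`. -/
noncomputable def gdens : ℝ × ℝ → ℝ := fun x => fdens (1 - x.2, 1 - x.1)

/-- The measure on `[0,1]²` with density `f` (w.r.t. Lebesgue measure on the plane). -/
noncomputable def μf : Measure (ℝ × ℝ) :=
  volume.withDensity fun x => ENNReal.ofReal (fdens x)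

/-- The measure on `[0,1]²` with density `g` (w.r.t. Lebesgue measure on the plane). -/
noncomputable def μg : Measure (ℝ × ℝ) :=
  volume.withDensity fun x => ENNReal.ofReal (gdens x)


lemma Icc_inter_Iic' (a b p : ℝ) : Icc a b ∩ Iic p = Icc a (min b p) := by
  ext x; simp [mem_Icc, le_min_iff, and_assoc]

lemma Icc_inter_Ici' (a b p : ℝ) : Icc a b ∩ Ici p = Icc (max a p) b := by
  ext x; simp only [mem_inter_iff, mem_Icc, mem_Ici, max_le_iff]; tauto

lemma vol_Iic_inter (p a b : ℝ) : volume (Iic p ∩ Icc a b) = ENNReal.ofReal (min b p - a) := by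
  rw [inter_comm, Icc_inter_Iic', Real.volume_Icc]

lemma vol_Ici_inter (p a b : ℝ) : volume (Ici p ∩ Icc a b) = ENNReal.ofReal (b - max a p) := by
  rw [inter_comm, Icc_inter_Ici', Real.volume_Icc]

lemma vol_Iio_inter (p a b : ℝ) : volume (Iio p ∩ Icc a b) = ENNReal.ofReal (min b p - a) := by
  rcases le_total p b with h | h
  · have e : Icc a b ∩ Iio p = Ico a p := by
      ext x; simp only [mem_inter_iff, mem_Icc, mem_Ico, mem_Iio]
      constructor
      · rintro ⟨⟨h1, h2⟩, h3⟩; exact ⟨h1, h3⟩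
      · rintro ⟨h1, h2⟩; exact ⟨⟨h1, by linarith⟩, h2⟩
    rw [inter_comm, e, Real.volume_Ico, min_eq_right h]
  · rcases lt_or_ge b p with h' | h'
    · have e : Icc a b ∩ Iio p = Icc a b := inter_eq_left.2 fun x hx => lt_of_le_of_lt hx.2 h'
      rw [inter_comm, e, Real.volume_Icc, min_eq_left (le_of_lt h')]
    · have hb : b = p := le_antisymm h h'
      subst hb
      have e : Icc a b ∩ Iio b = Ico a b := by
        ext x; simp only [mem_inter_iff, mem_Icc, mem_Ico, mem_Iio]
        constructor
        · rintro ⟨⟨h1, h2⟩, h3⟩; exact ⟨h1, h3⟩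
        · rintro ⟨h1, h2⟩; exact ⟨⟨h1, le_of_lt h2⟩, h2⟩
      rw [inter_comm, e, Real.volume_Ico, min_self]

lemma vol_Ioi_inter (p a b : ℝ) : volume (Ioi p ∩ Icc a b) = ENNReal.ofReal (b - max a p) := by
  rcases le_total a p with h | h
  · have e : Icc a b ∩ Ioi p = Ioc p b := by
      ext x; simp only [mem_inter_iff, mem_Icc, mem_Ioc, mem_Ioi]
      constructor
      · rintro ⟨⟨h1, h2⟩, h3⟩; exact ⟨h3, h2⟩
      · rintro ⟨h1, h2⟩; exact ⟨⟨by linarith, h2⟩, h1⟩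
    rw [inter_comm, e, Real.volume_Ioc, max_eq_right h]
  · rcases lt_or_ge p a with h' | h'
    · have e : Icc a b ∩ Ioi p = Icc a b := inter_eq_left.2 fun x hx => lt_of_lt_of_le h' hx.1
      rw [inter_comm, e, Real.volume_Icc, max_eq_left h]
    · have hpa : a = p := le_antisymm h' h
      subst hpa
      have e : Icc a b ∩ Ioi a = Ioc a b := by
        ext x; simp only [mem_inter_iff, mem_Icc, mem_Ioc, mem_Ioi]
        constructor
        · rintro ⟨⟨h1, h2⟩, h3⟩; exact ⟨h3, h2⟩
        · rintro ⟨h1, h2⟩; exact ⟨⟨le_of_lt h1, h2⟩, h1⟩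
      rw [inter_comm, e, Real.volume_Ioc, max_self]

lemma ofReal_clamp (x : ℝ) : ENNReal.ofReal x = ENNReal.ofReal (max 0 x) := by
  rcases le_total x 0 with h | h
  · rw [ENNReal.ofReal_of_nonpos h, max_eq_left h, ENNReal.ofReal_zero]
  · rw [max_eq_right h]

lemma ofReal_mul_ofReal (x y : ℝ) :
    ENNReal.ofReal x * ENNReal.ofReal y = ENNReal.ofReal (max 0 x * max 0 y) := by
  rw [ofReal_clamp x, ofReal_clamp y, ← ENNReal.ofReal_mul (le_max_left 0 x)]

lemma clamp_compl (c d p : ℝ) (h : c ≤ d) :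
    max 0 (min d p - c) + max 0 (d - max c p) = d - c := by
  rcases le_total p c with h1 | h1
  · rw [min_eq_right (by linarith), max_eq_left (by linarith), max_eq_left h1,
      max_eq_right (by linarith)]
    ring
  · rcases le_total p d with h2 | h2
    · rw [min_eq_right h2, max_eq_right (by linarith), max_eq_right h1,
        max_eq_right (by linarith)]
      ring
    · rw [min_eq_left h2, max_eq_right (by linarith), max_eq_right h1,
        max_eq_left (by linarith)]
      ring

lemma key1 (p : ℝ) :
    (max 0 (min (1/8) p - 0) - max 0 (min (3/8) p - 1/4)) *
      (max 0 (1/2 - max (3/8) p) - max 0 (3/4 - max (5/8) p)) = 0 := by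
  rcases le_total p (3/8) with h | h
  · rw [max_eq_left h, max_eq_left (show p ≤ (5/8:ℝ) by linarith)]
    norm_num
  · rw [min_eq_left (show (1/8:ℝ) ≤ p by linarith), min_eq_left h]
    norm_num

lemma key2 (p : ℝ) :
    (max 0 (min (3/8) p - 1/4) - max 0 (min (5/8) p - 1/2)) *
      (max 0 (1 - max (7/8) p) - max 0 (3/4 - max (5/8) p)) = 0 := by
  rcases le_total p (5/8) with h | h
  · rw [max_eq_left (show p ≤ (7/8:ℝ) by linarith), max_eq_left h]
    norm_num
  · rw [min_eq_left (show (3/8:ℝ) ≤ p by linarith), min_eq_left h]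
    norm_num

lemma algebra_atoms (s1 s2 s3 b1 b2 b3 c1 c2 c3 t1 t2 t3 : ℝ)
    (k1 : (s1 - s2) * (b1 - b2) = 0) (k2 : (s2 - s3) * (b3 - b2) = 0)
    (h1 : c1 + b1 = 1/8) (h2 : c2 + b2 = 1/8) (h3 : c3 + b3 = 1/8)
    (g1 : t1 + s1 = 1/8) (g2 : t2 + s2 = 1/8) (g3 : t3 + s3 = 1/8) :
    (s1*b1 + s2*b3 + s3*b2 = s3*b3 + s1*b2 + s2*b1) ∧
    (s1*c1 + s2*c3 + s3*c2 = s3*c3 + s1*c2 + s2*c1) ∧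
    (t1*b1 + t2*b3 + t3*b2 = t3*b3 + t1*b2 + t2*b1) ∧
    (t1*c1 + t2*c3 + t3*c2 = t3*c3 + t1*c2 + t2*c1) := by
  refine ⟨by linear_combination k1 + k2,
    by linear_combination (s1 - s2) * h1 + (s3 - s1) * h2 + (s2 - s3) * h3 - k1 - k2,
    by linear_combination (b1 - b2) * g1 + (b2 - b3) * g3 + (b3 - b1) * g2 - k1 - k2,
    by linear_combination c1 * (g1 - g2) + c3 * (g2 - g3) + c2 * (g3 - g1)
      + (s2 - s1) * h1 + (s1 - s3) * h2 + (s3 - s2) * h3 + k1 + k2⟩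

lemma gdens_eq : gdens = fun x : ℝ × ℝ =>
    (64 / 3) * ((if x.1 ∈ Icc (1/2:ℝ) (5/8) ∧ x.2 ∈ Icc (7/8:ℝ) 1 then (1:ℝ) else 0)
      + (if x.1 ∈ Icc (0:ℝ) (1/8) ∧ x.2 ∈ Icc (5/8:ℝ) (3/4) then (1:ℝ) else 0)
      + (if x.1 ∈ Icc (1/4:ℝ) (3/8) ∧ x.2 ∈ Icc (3/8:ℝ) (1/2) then (1:ℝ) else 0)) := by
  funext x
  simp only [gdens, fdens, mem_Icc]
  have e1 : ((0 ≤ 1 - x.2 ∧ 1 - x.2 ≤ 1/8) ∧ (3/8 ≤ 1 - x.1 ∧ 1 - x.1 ≤ 1/2)) ↔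
      ((1/2 ≤ x.1 ∧ x.1 ≤ 5/8) ∧ (7/8 ≤ x.2 ∧ x.2 ≤ 1)) := by
    constructor <;> rintro ⟨⟨h1, h2⟩, h3, h4⟩ <;>
      exact ⟨⟨by linarith, by linarith⟩, by linarith, by linarith⟩
  have e2 : ((1/4 ≤ 1 - x.2 ∧ 1 - x.2 ≤ 3/8) ∧ (7/8 ≤ 1 - x.1 ∧ 1 - x.1 ≤ 1)) ↔
      ((0 ≤ x.1 ∧ x.1 ≤ 1/8) ∧ (5/8 ≤ x.2 ∧ x.2 ≤ 3/4)) := by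
    constructor <;> rintro ⟨⟨h1, h2⟩, h3, h4⟩ <;>
      exact ⟨⟨by linarith, by linarith⟩, by linarith, by linarith⟩
  have e3 : ((1/2 ≤ 1 - x.2 ∧ 1 - x.2 ≤ 5/8) ∧ (5/8 ≤ 1 - x.1 ∧ 1 - x.1 ≤ 3/4)) ↔
      ((1/4 ≤ x.1 ∧ x.1 ≤ 3/8) ∧ (3/8 ≤ x.2 ∧ x.2 ≤ 1/2)) := by
    constructor <;> rintro ⟨⟨h1, h2⟩, h3, h4⟩ <;>
      exact ⟨⟨by linarith, by linarith⟩, by linarith, by linarith⟩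
  rw [if_congr e1 rfl rfl, if_congr e2 rfl rfl, if_congr e3 rfl rfl]

lemma withDensity_three (a a' c c' e e' f f' g g' i i' : ℝ) :
    (volume.withDensity fun x : ℝ × ℝ =>
        ENNReal.ofReal ((64 / 3) * ((if x.1 ∈ Icc a a' ∧ x.2 ∈ Icc c c' then (1:ℝ) else 0)
          + (if x.1 ∈ Icc e e' ∧ x.2 ∈ Icc f f' then (1:ℝ) else 0)
          + (if x.1 ∈ Icc g g' ∧ x.2 ∈ Icc i i' then (1:ℝ) else 0))))
      = ENNReal.ofReal (64/3) •
        (volume.restrict (Icc a a' ×ˢ Icc c c') + volume.restrict (Icc e e' ×ˢ Icc f f')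
          + volume.restrict (Icc g g' ×ˢ Icc i i')) := by
  have hrw : (fun x : ℝ × ℝ =>
      ENNReal.ofReal ((64 / 3) * ((if x.1 ∈ Icc a a' ∧ x.2 ∈ Icc c c' then (1:ℝ) else 0)
        + (if x.1 ∈ Icc e e' ∧ x.2 ∈ Icc f f' then (1:ℝ) else 0)
        + (if x.1 ∈ Icc g g' ∧ x.2 ∈ Icc i i' then (1:ℝ) else 0))))
      = ((Icc a a' ×ˢ Icc c c').indicator (fun _ => ENNReal.ofReal (64/3))
          + ((Icc e e' ×ˢ Icc f f').indicator (fun _ => ENNReal.ofReal (64/3))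
          + (Icc g g' ×ˢ Icc i i').indicator (fun _ => ENNReal.ofReal (64/3)))) := by
    funext x
    simp only [Pi.add_apply, Set.indicator_apply, Set.mem_prod, mem_Icc]
    split_ifs <;>
      norm_num [← ENNReal.ofReal_add, ENNReal.ofReal_eq_zero] <;>
      rw [← ENNReal.ofReal_add (by norm_num) (by norm_num)] <;> norm_num
  have m1 : MeasurableSet (Icc a a' ×ˢ Icc c c') := measurableSet_Icc.prod measurableSet_Icc
  have m2 : MeasurableSet (Icc e e' ×ˢ Icc f f') := measurableSet_Icc.prod measurableSet_Icc
  have m3 : MeasurableSet (Icc g g' ×ˢ Icc i i') := measurableSet_Icc.prod measurableSet_Icc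
  rw [hrw, withDensity_add_left (measurable_const.indicator m1),
    withDensity_add_left (measurable_const.indicator m2),
    withDensity_indicator m1, withDensity_indicator m2, withDensity_indicator m3,
    withDensity_const, withDensity_const, withDensity_const, smul_add, smul_add, add_assoc]

lemma μf_eq : μf = ENNReal.ofReal (64/3) •
    (volume.restrict (Icc (0:ℝ) (1/8) ×ˢ Icc (3/8:ℝ) (1/2))
      + volume.restrict (Icc (1/4:ℝ) (3/8) ×ˢ Icc (7/8:ℝ) 1)
      + volume.restrict (Icc (1/2:ℝ) (5/8) ×ˢ Icc (5/8:ℝ) (3/4))) := by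
  rw [show μf = volume.withDensity fun x => ENNReal.ofReal (fdens x) from rfl]
  exact withDensity_three _ _ _ _ _ _ _ _ _ _ _ _

lemma μg_eq : μg = ENNReal.ofReal (64/3) •
    (volume.restrict (Icc (1/2:ℝ) (5/8) ×ˢ Icc (7/8:ℝ) 1)
      + volume.restrict (Icc (0:ℝ) (1/8) ×ˢ Icc (5/8:ℝ) (3/4))
      + volume.restrict (Icc (1/4:ℝ) (3/8) ×ˢ Icc (3/8:ℝ) (1/2))) := by
  rw [show μg = volume.withDensity fun x => ENNReal.ofReal (gdens x) from rfl, gdens_eq]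
  exact withDensity_three _ _ _ _ _ _ _ _ _ _ _ _

lemma μ_decomp_apply (Q1 Q2 Q3 : Set (ℝ × ℝ)) {T : Set (ℝ × ℝ)} (hT : MeasurableSet T) :
    (ENNReal.ofReal (64/3) •
      (volume.restrict Q1 + volume.restrict Q2 + volume.restrict Q3)) T
    = ENNReal.ofReal (64/3) * (volume (T ∩ Q1) + volume (T ∩ Q2) + volume (T ∩ Q3)) := by
  simp [Measure.smul_apply, Measure.add_apply, Measure.restrict_apply hT, smul_eq_mul, mul_add]

lemma part_i (p : ℝ) :
    μf.map (fun x : ℝ × ℝ => (decide (x.1 ≤ p), decide (p ≤ x.2)))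
      = μg.map (fun x : ℝ × ℝ => (decide (x.1 ≤ p), decide (p ≤ x.2))) := by
  have hs : Measurable (fun x : ℝ × ℝ => decide (x.1 ≤ p)) := by
    apply measurable_to_bool
    have : (fun x : ℝ × ℝ => decide (x.1 ≤ p)) ⁻¹' {true} = Iic p ×ˢ (univ : Set ℝ) := by
      ext x; simp [decide_eq_true_iff, Set.mem_prod]
    rw [this]; exact measurableSet_Iic.prod MeasurableSet.univ
  have hb : Measurable (fun x : ℝ × ℝ => decide (p ≤ x.2)) := by
    apply measurable_to_bool
    have : (fun x : ℝ × ℝ => decide (p ≤ x.2)) ⁻¹' {true} = (univ : Set ℝ) ×ˢ Ici p := by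
      ext x; simp [decide_eq_true_iff, Set.mem_prod]
    rw [this]; exact MeasurableSet.univ.prod measurableSet_Ici
  have hF : Measurable (fun x : ℝ × ℝ => (decide (x.1 ≤ p), decide (p ≤ x.2))) := hs.prodMk hb
  apply Measure.ext_of_singleton
  rintro ⟨u, v⟩
  rw [Measure.map_apply hF (measurableSet_singleton _),
    Measure.map_apply hF (measurableSet_singleton _)]
  -- compute a key1/key2 based equality for arbitrary S T one-dim pieces
  have main : ∀ (S T : Set ℝ) (hS : MeasurableSet S) (hT : MeasurableSet T)
      (s1 s2 s3 b1 b2 b3 : ℝ)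
      (hv1 : volume (S ∩ Icc (0:ℝ) (1/8)) = ENNReal.ofReal s1)
      (hv2 : volume (S ∩ Icc (1/4:ℝ) (3/8)) = ENNReal.ofReal s2)
      (hv3 : volume (S ∩ Icc (1/2:ℝ) (5/8)) = ENNReal.ofReal s3)
      (hw1 : volume (T ∩ Icc (3/8:ℝ) (1/2)) = ENNReal.ofReal b1)
      (hw2 : volume (T ∩ Icc (5/8:ℝ) (3/4)) = ENNReal.ofReal b2)
      (hw3 : volume (T ∩ Icc (7/8:ℝ) 1) = ENNReal.ofReal b3)
      (hid : max 0 s1 * max 0 b1 + max 0 s2 * max 0 b3 + max 0 s3 * max 0 b2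
        = max 0 s3 * max 0 b3 + max 0 s1 * max 0 b2 + max 0 s2 * max 0 b1),
      μf (S ×ˢ T) = μg (S ×ˢ T) := by
    intro S T hS hT s1 s2 s3 b1 b2 b3 hv1 hv2 hv3 hw1 hw2 hw3 hid
    rw [μf_eq, μg_eq, μ_decomp_apply _ _ _ (hS.prod hT), μ_decomp_apply _ _ _ (hS.prod hT)]
    simp only [Set.prod_inter_prod, Measure.volume_eq_prod, Measure.prod_prod]
    rw [hv1, hv2, hv3, hw1, hw2, hw3]
    simp only [ofReal_mul_ofReal]
    rw [← ENNReal.ofReal_add (by positivity) (by positivity),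
      ← ENNReal.ofReal_add (by positivity) (by positivity),
      ← ENNReal.ofReal_add (by positivity) (by positivity),
      ← ENNReal.ofReal_add (by positivity) (by positivity)]
    exact congrArg _ (congrArg _ hid)
  have H1 : max 0 (min (1/2) p - 3/8) + max 0 (1/2 - max (3/8) p) = 1/8 := by
    have := clamp_compl (3/8) (1/2) p (by norm_num); linarith
  have H2 : max 0 (min (3/4) p - 5/8) + max 0 (3/4 - max (5/8) p) = 1/8 := by
    have := clamp_compl (5/8) (3/4) p (by norm_num); linarith
  have H3 : max 0 (min 1 p - 7/8) + max 0 (1 - max (7/8) p) = 1/8 := by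
    have := clamp_compl (7/8) 1 p (by norm_num); linarith
  have G1 : max 0 (1/8 - max 0 p) + max 0 (min (1/8) p - 0) = 1/8 := by
    have := clamp_compl 0 (1/8) p (by norm_num); linarith
  have G2 : max 0 (3/8 - max (1/4) p) + max 0 (min (3/8) p - 1/4) = 1/8 := by
    have := clamp_compl (1/4) (3/8) p (by norm_num); linarith
  have G3 : max 0 (5/8 - max (1/2) p) + max 0 (min (5/8) p - 1/2) = 1/8 := by
    have := clamp_compl (1/2) (5/8) p (by norm_num); linarith
  have ALG := algebra_atoms (max 0 (min (1/8) p - 0)) (max 0 (min (3/8) p - 1/4))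
    (max 0 (min (5/8) p - 1/2)) (max 0 (1/2 - max (3/8) p)) (max 0 (3/4 - max (5/8) p))
    (max 0 (1 - max (7/8) p)) (max 0 (min (1/2) p - 3/8)) (max 0 (min (3/4) p - 5/8))
    (max 0 (min 1 p - 7/8)) (max 0 (1/8 - max 0 p)) (max 0 (3/8 - max (1/4) p))
    (max 0 (5/8 - max (1/2) p)) (key1 p) (key2 p) H1 H2 H3 G1 G2 G3
  rcases u with _ | _ <;> rcases v with _ | _
  · have hpre : (fun x : ℝ × ℝ => (decide (x.1 ≤ p), decide (p ≤ x.2))) ⁻¹' {(false, false)}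
        = Ioi p ×ˢ Iio p := by
      ext x
      simp [Set.mem_preimage, Prod.ext_iff, Set.mem_prod, not_le]
    rw [hpre]
    exact main _ _ measurableSet_Ioi measurableSet_Iio _ _ _ _ _ _
      (vol_Ioi_inter p 0 (1/8)) (vol_Ioi_inter p (1/4) (3/8)) (vol_Ioi_inter p (1/2) (5/8))
      (vol_Iio_inter p (3/8) (1/2)) (vol_Iio_inter p (5/8) (3/4)) (vol_Iio_inter p (7/8) 1)
      ALG.2.2.2
  · have hpre : (fun x : ℝ × ℝ => (decide (x.1 ≤ p), decide (p ≤ x.2))) ⁻¹' {(false, true)}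
        = Ioi p ×ˢ Ici p := by
      ext x
      simp [Set.mem_preimage, Prod.ext_iff, Set.mem_prod, not_le]
    rw [hpre]
    exact main _ _ measurableSet_Ioi measurableSet_Ici _ _ _ _ _ _
      (vol_Ioi_inter p 0 (1/8)) (vol_Ioi_inter p (1/4) (3/8)) (vol_Ioi_inter p (1/2) (5/8))
      (vol_Ici_inter p (3/8) (1/2)) (vol_Ici_inter p (5/8) (3/4)) (vol_Ici_inter p (7/8) 1)
      ALG.2.2.1
  · have hpre : (fun x : ℝ × ℝ => (decide (x.1 ≤ p), decide (p ≤ x.2))) ⁻¹' {(true, false)}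
        = Iic p ×ˢ Iio p := by
      ext x
      simp [Set.mem_preimage, Prod.ext_iff, Set.mem_prod, not_le]
    rw [hpre]
    exact main _ _ measurableSet_Iic measurableSet_Iio _ _ _ _ _ _
      (vol_Iic_inter p 0 (1/8)) (vol_Iic_inter p (1/4) (3/8)) (vol_Iic_inter p (1/2) (5/8))
      (vol_Iio_inter p (3/8) (1/2)) (vol_Iio_inter p (5/8) (3/4)) (vol_Iio_inter p (7/8) 1)
      ALG.2.1
  · have hpre : (fun x : ℝ × ℝ => (decide (x.1 ≤ p), decide (p ≤ x.2))) ⁻¹' {(true, true)}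
        = Iic p ×ˢ Ici p := by
      ext x
      simp [Set.mem_preimage, Prod.ext_iff, Set.mem_prod, not_le]
    rw [hpre]
    exact main _ _ measurableSet_Iic measurableSet_Ici _ _ _ _ _ _
      (vol_Iic_inter p 0 (1/8)) (vol_Iic_inter p (1/4) (3/8)) (vol_Iic_inter p (1/2) (5/8))
      (vol_Ici_inter p (3/8) (1/2)) (vol_Ici_inter p (5/8) (3/4)) (vol_Ici_inter p (7/8) 1)
      ALG.1

lemma gft_eq_indicator (p : ℝ) : (fun x : ℝ × ℝ => gft p x.1 x.2)
    = (Iic p ×ˢ Ici p).indicator (fun x => x.2 - x.1) := by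
  funext x
  simp [gft, Set.indicator_apply, Set.mem_prod, mem_Iic, mem_Ici]

lemma gft_intOn (p a a' c c' : ℝ) :
    IntegrableOn (fun x : ℝ × ℝ => gft p x.1 x.2) (Icc a a' ×ˢ Icc c c') := by
  rw [gft_eq_indicator, Icc_prod_Icc]
  exact ((continuous_snd.sub continuous_fst).integrableOn_Icc).indicator
    (measurableSet_Iic.prod measurableSet_Ici)

lemma setInt_Icc_zero (g : ℝ → ℝ) {A B : ℝ} (h : B ≤ A) : ∫ s in Icc A B, g s = 0 := by
  rcases lt_or_eq_of_le h with h' | h'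
  · rw [Icc_eq_empty (not_le.2 h')]
    simp
  · subst h'
    rw [Icc_self, Measure.restrict_singleton]
    simp

lemma inner_int (s u v : ℝ) (h : u ≤ v) :
    ∫ b in Icc u v, (b - s) = (v^2 - u^2)/2 - (v - u) * s := by
  rw [MeasureTheory.integral_Icc_eq_integral_Ioc, ← intervalIntegral.integral_of_le h,
    intervalIntegral.integral_sub (continuous_id'.intervalIntegrable _ _)
      intervalIntegrable_const,
    integral_id, intervalIntegral.integral_const, smul_eq_mul]

lemma outer_int (A B u v : ℝ) (hAB : A ≤ B) (huv : u ≤ v) :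
    (∫ s in Icc A B, ∫ b in Icc u v, (b - s))
      = (B - A) * ((v^2 - u^2)/2) - ((B^2 - A^2)/2) * (v - u) := by
  have hin : ∀ s : ℝ, (∫ b in Icc u v, (b - s)) = (v^2 - u^2)/2 - (v - u) * s :=
    fun s => inner_int s u v huv
  simp only [hin]
  rw [MeasureTheory.integral_Icc_eq_integral_Ioc, ← intervalIntegral.integral_of_le hAB,
    intervalIntegral.integral_sub intervalIntegrable_const
      ((show Continuous fun x : ℝ => (v - u) * x from continuous_const.mul continuous_id).intervalIntegrable _ _),
    intervalIntegral.integral_const, intervalIntegral.integral_const_mul,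
    integral_id, smul_eq_mul]
  ring

lemma rect_integral (p a a' c c' : ℝ) :
    ∫ x in Icc a a' ×ˢ Icc c c', gft p x.1 x.2
      = ∫ s in Icc a (min a' p), ∫ b in Icc (max c p) c', (b - s) := by
  rw [show (fun x : ℝ × ℝ => gft p x.1 x.2)
      = (Iic p ×ˢ Ici p).indicator (fun x => x.2 - x.1) from gft_eq_indicator p,
    MeasureTheory.setIntegral_indicator (measurableSet_Iic.prod measurableSet_Ici),
    Set.prod_inter_prod, Icc_inter_Iic', Icc_inter_Ici']
  have hint : IntegrableOn (fun x : ℝ × ℝ => x.2 - x.1)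
      (Icc a (min a' p) ×ˢ Icc (max c p) c') := by
    apply ((continuous_snd.sub continuous_fst).integrableOn_Icc
      (a := (a, max c p)) (b := (min a' p, c'))).mono_set
    rw [← Icc_prod_Icc]
  rw [Measure.volume_eq_prod, ← Measure.prod_restrict,
    MeasureTheory.integral_prod _ (by
      rw [Measure.prod_restrict, ← Measure.volume_eq_prod]
      exact hint)]

lemma integral_three (G : ℝ × ℝ → ℝ) (ν1 ν2 ν3 : Measure (ℝ × ℝ))
    (i1 : Integrable G ν1) (i2 : Integrable G ν2) (i3 : Integrable G ν3) :
    (∫ x, G x ∂(ENNReal.ofReal (64/3) • (ν1 + ν2 + ν3)))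
    = (64/3) * ((∫ x, G x ∂ν1) + (∫ x, G x ∂ν2) + (∫ x, G x ∂ν3)) := by
  rw [integral_smul_measure, integral_add_measure (i1.add_measure i2) i3,
    integral_add_measure i1 i2, ENNReal.toReal_ofReal (by norm_num), smul_eq_mul]

set_option maxHeartbeats 1600000 in
lemma integral_μf (p : ℝ) : (∫ x, gft p x.1 x.2 ∂μf)
    = (64/3) * ((∫ x in Icc (0:ℝ) (1/8) ×ˢ Icc (3/8:ℝ) (1/2), gft p x.1 x.2)
      + (∫ x in Icc (1/4:ℝ) (3/8) ×ˢ Icc (7/8:ℝ) 1, gft p x.1 x.2)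
      + (∫ x in Icc (1/2:ℝ) (5/8) ×ˢ Icc (5/8:ℝ) (3/4), gft p x.1 x.2)) := by
  have i1 : IntegrableOn (fun x : ℝ × ℝ => gft p x.1 x.2)
      (Icc (0:ℝ) (1/8) ×ˢ Icc (3/8:ℝ) (1/2)) := gft_intOn p 0 (1/8) (3/8) (1/2)
  have i2 : IntegrableOn (fun x : ℝ × ℝ => gft p x.1 x.2)
      (Icc (1/4:ℝ) (3/8) ×ˢ Icc (7/8:ℝ) 1) := gft_intOn p (1/4) (3/8) (7/8) 1
  have i3 : IntegrableOn (fun x : ℝ × ℝ => gft p x.1 x.2)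
      (Icc (1/2:ℝ) (5/8) ×ˢ Icc (5/8:ℝ) (3/4)) := gft_intOn p (1/2) (5/8) (5/8) (3/4)
  rw [μf_eq]
  exact integral_three _ _ _ _ i1 i2 i3

set_option maxHeartbeats 1600000 in
lemma integral_μg (p : ℝ) : (∫ x, gft p x.1 x.2 ∂μg)
    = (64/3) * ((∫ x in Icc (1/2:ℝ) (5/8) ×ˢ Icc (7/8:ℝ) 1, gft p x.1 x.2)
      + (∫ x in Icc (0:ℝ) (1/8) ×ˢ Icc (5/8:ℝ) (3/4), gft p x.1 x.2)
      + (∫ x in Icc (1/4:ℝ) (3/8) ×ˢ Icc (3/8:ℝ) (1/2), gft p x.1 x.2)) := by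
  have i1 : IntegrableOn (fun x : ℝ × ℝ => gft p x.1 x.2)
      (Icc (1/2:ℝ) (5/8) ×ˢ Icc (7/8:ℝ) 1) := gft_intOn p (1/2) (5/8) (7/8) 1
  have i2 : IntegrableOn (fun x : ℝ × ℝ => gft p x.1 x.2)
      (Icc (0:ℝ) (1/8) ×ˢ Icc (5/8:ℝ) (3/4)) := gft_intOn p 0 (1/8) (5/8) (3/4)
  have i3 : IntegrableOn (fun x : ℝ × ℝ => gft p x.1 x.2)
      (Icc (1/4:ℝ) (3/8) ×ˢ Icc (3/8:ℝ) (1/2)) := gft_intOn p (1/4) (3/8) (3/8) (1/2)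
  rw [μg_eq]
  exact integral_three _ _ _ _ i1 i2 i3

lemma f_value : (∫ x, gft (3/8) x.1 x.2 ∂μf) = 1/3 := by
  rw [integral_μf]
  simp only [rect_integral]
  have hz : (∫ s in Icc (1/2 : ℝ) (min (5/8) (3/8)),
      ∫ b in Icc (max (5/8 : ℝ) (3/8)) (3/4), (b - s)) = 0 := by
    rw [show min (5/8 : ℝ) (3/8) = 3/8 by norm_num]
    exact setInt_Icc_zero _ (by norm_num)
  rw [hz, show min (1/8 : ℝ) (3/8) = 1/8 by norm_num,
    show max (3/8 : ℝ) (3/8) = 3/8 by norm_num,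
    show min (3/8 : ℝ) (3/8) = 3/8 by norm_num,
    show max (7/8 : ℝ) (3/8) = 7/8 by norm_num,
    outer_int 0 (1/8) (3/8) (1/2) (by norm_num) (by norm_num),
    outer_int (1/4) (3/8) (7/8) 1 (by norm_num) (by norm_num)]
  norm_num

lemma g_value : (∫ x, gft (5/8) x.1 x.2 ∂μg) = 1/3 := by
  rw [integral_μg]
  simp only [rect_integral]
  have hz : (∫ s in Icc (1/4 : ℝ) (min (3/8) (5/8)),
      ∫ b in Icc (max (3/8 : ℝ) (5/8)) (1/2), (b - s)) = 0 := by
    have : ∀ s : ℝ, (∫ b in Icc (max (3/8 : ℝ) (5/8)) (1/2), (b - s)) = 0 := fun s => by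
      rw [show max (3/8 : ℝ) (5/8) = 5/8 by norm_num]
      exact setInt_Icc_zero _ (by norm_num)
    simp only [this, integral_zero]
  rw [hz, show min (5/8 : ℝ) (5/8) = 5/8 by norm_num,
    show max (7/8 : ℝ) (5/8) = 7/8 by norm_num,
    show min (1/8 : ℝ) (5/8) = 1/8 by norm_num,
    show max (5/8 : ℝ) (5/8) = 5/8 by norm_num,
    outer_int (1/2) (5/8) (7/8) 1 (by norm_num) (by norm_num),
    outer_int 0 (1/8) (5/8) (3/4) (by norm_num) (by norm_num)]
  norm_num

lemma f_bound (p : ℝ) (hp1 : 1/2 < p) (hp2 : p ≤ 1) :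
    (∫ x, gft p x.1 x.2 ∂μf) ≤ 1/4 := by
  rw [integral_μf]
  simp only [rect_integral]
  have hz1 : (∫ s in Icc (0:ℝ) (min (1/8) p),
      ∫ b in Icc (max (3/8:ℝ) p) (1/2), (b - s)) = 0 := by
    have h : ∀ s : ℝ, (∫ b in Icc (max (3/8:ℝ) p) (1/2), (b - s)) = 0 := fun s => by
      rw [max_eq_right (by linarith : (3/8:ℝ) ≤ p)]
      exact setInt_Icc_zero _ (le_of_lt hp1)
    simp only [h, integral_zero]
  rw [hz1, show min (3/8:ℝ) p = 3/8 from min_eq_left (by linarith)]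
  rcases le_total p (5/8) with h58 | h58
  · rw [show max (7/8:ℝ) p = 7/8 from max_eq_left (by linarith),
      show min (5/8:ℝ) p = p from min_eq_right h58,
      show max (5/8:ℝ) p = 5/8 from max_eq_left h58,
      outer_int (1/4) (3/8) (7/8) 1 (by norm_num) (by norm_num),
      outer_int (1/2) p (5/8) (3/4) (by linarith) (by norm_num)]
    nlinarith [mul_nonneg (by linarith : (0:ℝ) ≤ 5/8 - p) (by linarith : (0:ℝ) ≤ 3/4 - p)]
  · rcases le_total p (3/4) with h34 | h34
    · rw [show max (7/8:ℝ) p = 7/8 from max_eq_left (by linarith),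
        show min (5/8:ℝ) p = 5/8 from min_eq_left h58,
        show max (5/8:ℝ) p = p from max_eq_right h58,
        outer_int (1/4) (3/8) (7/8) 1 (by norm_num) (by norm_num),
        outer_int (1/2) (5/8) p (3/4) (by norm_num) h34]
      nlinarith [mul_nonneg (by linarith : (0:ℝ) ≤ p - 5/8) (by linarith : (0:ℝ) ≤ p - 1/2)]
    · have hz3 : (∫ s in Icc (1/2:ℝ) (min (5/8) p),
          ∫ b in Icc (max (5/8:ℝ) p) (3/4), (b - s)) = 0 := by
        have h : ∀ s : ℝ, (∫ b in Icc (max (5/8:ℝ) p) (3/4), (b - s)) = 0 := fun s => by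
          rw [max_eq_right (by linarith : (5/8:ℝ) ≤ p)]
          exact setInt_Icc_zero _ h34
        simp only [h, integral_zero]
      rw [hz3]
      rcases le_total p (7/8) with h78 | h78
      · rw [show max (7/8:ℝ) p = 7/8 from max_eq_left h78,
          outer_int (1/4) (3/8) (7/8) 1 (by norm_num) (by norm_num)]
        norm_num
      · rw [show max (7/8:ℝ) p = p from max_eq_right h78,
          outer_int (1/4) (3/8) p 1 (by norm_num) hp2]
        nlinarith [sq_nonneg (p - 7/8)]

lemma g_bound (p : ℝ) (hp1 : 0 ≤ p) (hp2 : p ≤ 1/2) :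
    (∫ x, gft p x.1 x.2 ∂μg) ≤ 1/4 := by
  rw [integral_μg]
  simp only [rect_integral]
  have hzA : (∫ s in Icc (1/2:ℝ) (min (5/8) p),
      ∫ b in Icc (max (7/8:ℝ) p) 1, (b - s)) = 0 := by
    rw [show min (5/8:ℝ) p = p from min_eq_right (by linarith)]
    exact setInt_Icc_zero _ hp2
  rw [hzA, show max (5/8:ℝ) p = 5/8 from max_eq_left (by linarith)]
  rcases le_total p (1/8) with h18 | h18
  · have hzC : (∫ s in Icc (1/4:ℝ) (min (3/8) p),
        ∫ b in Icc (max (3/8:ℝ) p) (1/2), (b - s)) = 0 := by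
      rw [show min (3/8:ℝ) p = p from min_eq_right (by linarith)]
      exact setInt_Icc_zero _ (by linarith)
    rw [hzC, show min (1/8:ℝ) p = p from min_eq_right h18,
      outer_int 0 p (5/8) (3/4) hp1 (by norm_num)]
    nlinarith [sq_nonneg p]
  · rw [show min (1/8:ℝ) p = 1/8 from min_eq_left h18,
      outer_int 0 (1/8) (5/8) (3/4) (by norm_num) (by norm_num)]
    rcases le_total p (1/4) with h14 | h14
    · have hzC : (∫ s in Icc (1/4:ℝ) (min (3/8) p),
          ∫ b in Icc (max (3/8:ℝ) p) (1/2), (b - s)) = 0 := by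
        rw [show min (3/8:ℝ) p = p from min_eq_right (by linarith)]
        exact setInt_Icc_zero _ h14
      rw [hzC]
      norm_num
    · rcases le_total p (3/8) with h38 | h38
      · rw [show min (3/8:ℝ) p = p from min_eq_right h38,
          show max (3/8:ℝ) p = 3/8 from max_eq_left h38,
          outer_int (1/4) p (3/8) (1/2) h14 (by norm_num)]
        nlinarith [mul_nonneg (by linarith : (0:ℝ) ≤ 3/8 - p) (by linarith : (0:ℝ) ≤ 1/2 - p)]
      · rw [show min (3/8:ℝ) p = 3/8 from min_eq_left h38,
          show max (3/8:ℝ) p = p from max_eq_right h38,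
          outer_int (1/4) (3/8) p (1/2) (by norm_num) hp2]
        nlinarith [mul_nonneg (by linarith : (0:ℝ) ≤ p - 3/8) (by linarith : (0:ℝ) ≤ p - 1/4)]


/-- **Indistinguishability under realistic feedback.**
(i) For every price `p ∈ [0,1]`, the law of the realistic feedback `(𝟙{S ≤ p}, 𝟙{p ≤ B})`
is the same under `f` and under `g`; (ii) under `f`, the price `3/8` has expected gain from
trade `1/3` while every `p ∈ (1/2, 1]` earns at most `1/4`; symmetrically, under `g`, the
price `5/8` earns `1/3` while every `p ∈ [0, 1/2]` earns at most `1/4`. -/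
theorem realistic_feedback_indistinguishability :
    (∀ p ∈ Icc (0:ℝ) 1,
      μf.map (fun x : ℝ × ℝ => (decide (x.1 ≤ p), decide (p ≤ x.2)))
        = μg.map (fun x : ℝ × ℝ => (decide (x.1 ≤ p), decide (p ≤ x.2))))
    ∧ (∫ x, gft (3/8) x.1 x.2 ∂μf) = 1/3
    ∧ (∀ p ∈ Ioc (1/2:ℝ) 1, (∫ x, gft p x.1 x.2 ∂μf) ≤ 1/4)
    ∧ (∫ x, gft (5/8) x.1 x.2 ∂μg) = 1/3
    ∧ (∀ p ∈ Icc (0:ℝ) (1/2), (∫ x, gft p x.1 x.2 ∂μg) ≤ 1/4) := by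
  exact ⟨fun p _ => part_i p, f_value, fun p hp => f_bound p hp.1 hp.2,
    g_value, fun p hp => g_bound p hp.1 hp.2⟩
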